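/- arXiv:2011.06428 — 2 statements merged into one kernel-verified Lean document; each statement's English description precedes it below -/
import Mathlib

section
/- Let I be a nonempty finite index set and for each i ∈ I let Ω_i be a nonempty finite type, and let Ω = ∏_{i∈I} Ω_i. Let P and Q be strictly positive probability mass functions on Ω (i.e. P(x) > 0 and Q(x) > 0 for all x ∈ Ω, and each sums to 1 over Ω). Suppose that for every coordinate j ∈ I and every configuration x ∈ Ω the full conditional distributions agree, i.e. P(x_j | x_{I∖{j}}) = Q(x_j | x_{I∖{j}}), where P(x_j | x_{I∖{j}}) = P(x) / (∑_{v ∈ Ω_j} P(x with coordinate j replaced by v)) and similarly for Q. Then P = Q. -/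
/-- Positive-distribution Hammersley–Clifford / Brook uniqueness: two strictly
positive probability mass functions on a finite product space with the same
univariate full conditionals (each coordinate given all the others) are equal. -/
theorem full_conditionals_determine_joint
    {I : Type*} [Fintype I] [Nonempty I] [DecidableEq I]
    {Ω : I → Type*} [∀ i, Fintype (Ω i)] [∀ i, Nonempty (Ω i)]
    (P Q : (∀ i, Ω i) → ℝ)
    (hPpos : ∀ x, 0 < P x) (hQpos : ∀ x, 0 < Q x)
    (hPsum : ∑ x, P x = 1) (hQsum : ∑ x, Q x = 1)
    (hcond : ∀ (j : I) (x : ∀ i, Ω i),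
      P x / (∑ v : Ω j, P (Function.update x j v)) =
      Q x / (∑ v : Ω j, Q (Function.update x j v))) :
    P = Q := by
  have hSP : ∀ (j : I) (x : ∀ i, Ω i), 0 < ∑ v : Ω j, P (Function.update x j v) :=
    fun j x => Finset.sum_pos (fun v _ => hPpos _) Finset.univ_nonempty
  have hSQ : ∀ (j : I) (x : ∀ i, Ω i), 0 < ∑ v : Ω j, Q (Function.update x j v) :=
    fun j x => Finset.sum_pos (fun v _ => hQpos _) Finset.univ_nonempty
  -- ratio P/Q equals the ratio of the coordinate sums
  have hratio : ∀ (j : I) (x : ∀ i, Ω i),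
      P x / Q x = (∑ v : Ω j, P (Function.update x j v)) /
        (∑ v : Ω j, Q (Function.update x j v)) := by
    intro j x
    have h := hcond j x
    rw [div_eq_div_iff (hSP j x).ne' (hSQ j x).ne'] at h
    rw [div_eq_div_iff (hQpos x).ne' (hSQ j x).ne']
    linarith
  -- ratio invariant under updating one coordinate
  have hstep : ∀ (j : I) (x : ∀ i, Ω i) (v : Ω j),
      P (Function.update x j v) / Q (Function.update x j v) = P x / Q x := by
    intro j x v
    rw [hratio j x, hratio j (Function.update x j v)]
    simp [Function.update_idem]
  -- ratio constant
  have hconst : ∀ x y : ∀ i, Ω i, P x / Q x = P y / Q y := by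
    intro x y
    have key : ∀ s : Finset I,
        P (fun i => if i ∈ s then y i else x i) / Q (fun i => if i ∈ s then y i else x i)
          = P x / Q x := by
      intro s
      induction s using Finset.induction with
      | empty => simp
      | @insert j s hj ih =>
        have heq : (fun i => if i ∈ insert j s then y i else x i) =
            Function.update (fun i => if i ∈ s then y i else x i) j (y j) := by
          funext i
          by_cases hij : i = j
          · subst hij; simp
          · simp [Function.update_of_ne hij, hij]
        rw [heq, hstep, ih]
    have := key Finset.univ
    simp at this
    rw [← this]
  obtain ⟨x0⟩ := (inferInstance : Nonempty (∀ i, Ω i))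
  have hsum : ∑ x, P x = ∑ x, (P x0 / Q x0) * Q x := by
    apply Finset.sum_congr rfl
    intro x _
    have h := hconst x x0
    rw [div_eq_div_iff (hQpos x).ne' (hQpos x0).ne'] at h
    rw [div_mul_eq_mul_div, eq_div_iff (hQpos x0).ne']
    linarith
  rw [hPsum, ← Finset.mul_sum, hQsum, mul_one] at hsum
  funext x
  have h := hconst x x0
  rw [← hsum] at h
  exact (div_eq_one_iff_eq (hQpos x).ne').mp h
end

section
/- Let I be a nonempty finite index set, Ω_i nonempty finite types, Ω = ∏_{i∈I} Ω_i, and let P, Q be strictly positive probability mass functions on Ω. Suppose that for every coordinate j ∈ I, ∑_{x∈Ω} P(x) · log Q(x_j | x_{I∖{j}}) = ∑_{x∈Ω} P(x) · log P(x_j | x_{I∖{j}}), where the full conditional of a strictly positive pmf R is R(x_j | x_{I∖{j}}) = R(x) / (∑_{v∈Ω_j} R(x with coordinate j replaced by v)). Then Q = P. -/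
private lemma gibbs_aux {α : Type*} [Fintype α] (p q : α → ℝ) (hp : ∀ a, 0 < p a) (hq : ∀ a, 0 < q a)
    (hs : ∑ a, q a = ∑ a, p a) :
    0 ≤ ∑ a, p a * Real.log (p a / q a) ∧
    (∑ a, p a * Real.log (p a / q a) = 0 → p = q) := by
  have key : ∀ a ∈ Finset.univ, p a * Real.log (q a / p a) ≤ q a - p a := by
    intro a _
    have h := Real.log_le_sub_one_of_pos (div_pos (hq a) (hp a))
    calc p a * Real.log (q a / p a) ≤ p a * (q a / p a - 1) :=
          mul_le_mul_of_nonneg_left h (hp a).le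
      _ = q a - p a := by rw [mul_sub, mul_one, mul_div_cancel₀ _ (hp a).ne']
  have hneg : ∑ a, p a * Real.log (p a / q a) = -∑ a, p a * Real.log (q a / p a) := by
    rw [← Finset.sum_neg_distrib]
    refine Finset.sum_congr rfl fun a _ => ?_
    rw [Real.log_div (hp a).ne' (hq a).ne', Real.log_div (hq a).ne' (hp a).ne']
    ring
  have hle : ∑ a, p a * Real.log (q a / p a) ≤ 0 := by
    calc ∑ a, p a * Real.log (q a / p a) ≤ ∑ a, (q a - p a) := Finset.sum_le_sum key
      _ = 0 := by rw [Finset.sum_sub_distrib, hs, sub_self]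
  constructor
  · rw [hneg]; linarith
  · intro h0
    by_contra hne
    obtain ⟨a, ha⟩ : ∃ a, p a ≠ q a := Function.ne_iff.mp hne
    have hstrict : ∑ b, p b * Real.log (q b / p b) < ∑ b, (q b - p b) := by
      refine Finset.sum_lt_sum key ⟨a, Finset.mem_univ a, ?_⟩
      have hne1 : q a / p a ≠ 1 := fun h1 =>
        ha ((div_eq_one_iff_eq (hp a).ne').mp h1).symm
      have hlt := Real.log_lt_sub_one_of_pos (div_pos (hq a) (hp a)) hne1
      calc p a * Real.log (q a / p a) < p a * (q a / p a - 1) :=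
            mul_lt_mul_of_pos_left hlt (hp a)
        _ = q a - p a := by rw [mul_sub, mul_one, mul_div_cancel₀ _ (hp a).ne']
    rw [Finset.sum_sub_distrib, hs, sub_self] at hstrict
    rw [hneg] at h0
    linarith

/-- Two-step structure of the proof of Theorem 1: a strictly positive `Q` that
attains, for every coordinate `j`, the maximal expected conditional
log-likelihood under the strictly positive truth `P` must equal `P`. -/
theorem pseudo_logLikelihood_maximizer_eq
    {I : Type*} [Fintype I] [Nonempty I] [DecidableEq I]
    {Ω : I → Type*} [∀ i, Fintype (Ω i)] [∀ i, Nonempty (Ω i)]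
    (P Q : (∀ i, Ω i) → ℝ)
    (hPpos : ∀ x, 0 < P x) (hQpos : ∀ x, 0 < Q x)
    (hPsum : ∑ x, P x = 1) (hQsum : ∑ x, Q x = 1)
    (heq : ∀ j : I,
      ∑ x, P x * Real.log (Q x / (∑ v : Ω j, Q (Function.update x j v))) =
      ∑ x, P x * Real.log (P x / (∑ v : Ω j, P (Function.update x j v)))) :
    Q = P := by
  -- positivity of fiber sums
  have hSpos : ∀ (R : (∀ i, Ω i) → ℝ), (∀ x, 0 < R x) → ∀ (j : I) (x : ∀ i, Ω i),
      0 < ∑ v : Ω j, R (Function.update x j v) := fun R hR j x =>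
    Finset.sum_pos (fun v _ => hR _) Finset.univ_nonempty
  -- Step 1: equal full conditionals
  have hcond : ∀ (j : I) (x : ∀ i, Ω i),
      P x / (∑ v : Ω j, P (Function.update x j v)) =
      Q x / (∑ v : Ω j, Q (Function.update x j v)) := by
    intro j
    set es := (Equiv.piSplitAt j Ω).symm with hes
    have hupd : ∀ (v v' : Ω j) (y : ∀ i : {i // i ≠ j}, Ω i),
        Function.update (es (v, y)) j v' = es (v', y) := by
      intro v v' y
      funext i
      rcases eq_or_ne i j with rfl | h
      · simp [hes, Equiv.piSplitAt]
      · simp [Function.update_of_ne h, hes, Equiv.piSplitAt, h]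
    set TP : (∀ i : {i // i ≠ j}, Ω i) → ℝ := fun y => ∑ v, P (es (v, y)) with hTP
    set TQ : (∀ i : {i // i ≠ j}, Ω i) → ℝ := fun y => ∑ v, Q (es (v, y)) with hTQ
    have hTPpos : ∀ y, 0 < TP y := fun y =>
      Finset.sum_pos (fun v _ => hPpos _) Finset.univ_nonempty
    have hTQpos : ∀ y, 0 < TQ y := fun y =>
      Finset.sum_pos (fun v _ => hQpos _) Finset.univ_nonempty
    have hsum_eq : ∀ (f : (∀ i, Ω i) → ℝ),
        ∑ x, f x = ∑ y : (∀ i : {i // i ≠ j}, Ω i), ∑ v : Ω j, f (es (v, y)) := by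
      intro f
      rw [← Equiv.sum_comp es f, Fintype.sum_prod_type]
      exact Finset.sum_comm
    -- rewrite heq j fiberwise
    have H : ∑ y : (∀ i : {i // i ≠ j}, Ω i),
        (∑ v, P (es (v, y)) * Real.log (P (es (v, y)) / TP y)
          - ∑ v, P (es (v, y)) * Real.log (Q (es (v, y)) / TQ y)) = 0 := by
      have h := heq j
      rw [hsum_eq (fun x => P x * Real.log (Q x / (∑ v : Ω j, Q (Function.update x j v)))),
          hsum_eq (fun x => P x * Real.log (P x / (∑ v : Ω j, P (Function.update x j v))))] at h
      simp only [hupd] at h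
      rw [Finset.sum_sub_distrib]
      rw [sub_eq_zero]
      exact h.symm
    -- each fiber term is TP y times a KL divergence
    have hD : ∀ y, (∑ v, P (es (v, y)) * Real.log (P (es (v, y)) / TP y)
          - ∑ v, P (es (v, y)) * Real.log (Q (es (v, y)) / TQ y))
        = TP y * ∑ v, (P (es (v, y)) / TP y) *
            Real.log ((P (es (v, y)) / TP y) / (Q (es (v, y)) / TQ y)) := by
      intro y
      rw [Finset.mul_sum, ← Finset.sum_sub_distrib]
      refine Finset.sum_congr rfl fun v _ => ?_
      have hcancel : TP y * (P (es (v, y)) / TP y) = P (es (v, y)) :=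
        mul_div_cancel₀ _ (hTPpos y).ne'
      rw [Real.log_div (div_pos (hPpos _) (hTPpos y)).ne' (div_pos (hQpos _) (hTQpos y)).ne',
        ← mul_assoc, hcancel, mul_sub]
    have hpq : ∀ y, (fun v => P (es (v, y)) / TP y) = (fun v => Q (es (v, y)) / TQ y) := by
      intro y
      have hps : ∀ y, ∑ v, P (es (v, y)) / TP y = 1 := fun y => by
        rw [← Finset.sum_div, div_self (hTPpos y).ne']
      have hqs : ∀ y, ∑ v, Q (es (v, y)) / TQ y = 1 := fun y => by
        rw [← Finset.sum_div, div_self (hTQpos y).ne']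
      have hg := gibbs_aux (fun v => P (es (v, y)) / TP y) (fun v => Q (es (v, y)) / TQ y)
        (fun v => div_pos (hPpos _) (hTPpos y)) (fun v => div_pos (hQpos _) (hTQpos y))
        (by rw [hps y, hqs y])
      have hnn : ∀ y' ∈ Finset.univ, 0 ≤ (∑ v, P (es (v, y')) * Real.log (P (es (v, y')) / TP y')
          - ∑ v, P (es (v, y')) * Real.log (Q (es (v, y')) / TQ y')) := by
        intro y' _
        rw [hD y']
        refine mul_nonneg (hTPpos y').le ?_
        exact (gibbs_aux (fun v => P (es (v, y')) / TP y') (fun v => Q (es (v, y')) / TQ y')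
          (fun v => div_pos (hPpos _) (hTPpos y')) (fun v => div_pos (hQpos _) (hTQpos y'))
          (by rw [hps y', hqs y'])).1
      have hzero := (Finset.sum_eq_zero_iff_of_nonneg hnn).mp H y (Finset.mem_univ y)
      rw [hD y] at hzero
      have := (mul_eq_zero.mp hzero).resolve_left (hTPpos y).ne'
      exact hg.2 this
    -- conclude for arbitrary x
    intro x
    obtain ⟨⟨v, y⟩, rfl⟩ := es.surjective x
    have h1 : (∑ v' : Ω j, P (Function.update (es (v, y)) j v')) = TP y := by
      simp only [hupd]
      rfl
    have h2 : (∑ v' : Ω j, Q (Function.update (es (v, y)) j v')) = TQ y := by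
      simp only [hupd]
      rfl
    rw [h1, h2]
    exact congrFun (hpq y) v
  -- cross-multiplied form
  have hcross : ∀ (j : I) (x : ∀ i, Ω i),
      P x * (∑ v : Ω j, Q (Function.update x j v)) =
      Q x * (∑ v : Ω j, P (Function.update x j v)) := by
    intro j x
    have := hcond j x
    rw [div_eq_div_iff (hSpos P hPpos j x).ne' (hSpos Q hQpos j x).ne'] at this
    exact this
  -- Step 2: Brook's lemma
  have key : ∀ (s : Finset I) (x y : ∀ i, Ω i), (∀ i, i ∉ s → x i = y i) →
      Q y * P x = P y * Q x := by
    intro s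
    induction s using Finset.induction with
    | empty =>
      intro x y h
      have : x = y := funext fun i => h i (Finset.notMem_empty i)
      rw [this]; ring
    | insert a s ha ih =>
      intro x y h
      set z := Function.update x a (y a) with hz
      have hSz : ∀ (R : (∀ i, Ω i) → ℝ) (v : Ω a),
          R (Function.update z a v) = R (Function.update x a v) := by
        intro R v
        rw [hz, Function.update_idem]
      have hx := hcross a x
      have hzc := hcross a z
      simp only [hSz] at hzc
      -- from hx, hzc : Q z * P x = P z * Q x
      have h1 : Q z * P x = P z * Q x := by
        have hSP := (hSpos P hPpos a x).ne'
        have hSQ := (hSpos Q hQpos a x).ne'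
        have e1 : (Q z * P x) * ((∑ v : Ω a, Q (Function.update x a v)) *
            (∑ v : Ω a, P (Function.update x a v))) = (P z * Q x) *
            ((∑ v : Ω a, Q (Function.update x a v)) *
            (∑ v : Ω a, P (Function.update x a v))) := by
          calc (Q z * P x) * ((∑ v : Ω a, Q (Function.update x a v)) *
              (∑ v : Ω a, P (Function.update x a v)))
              = (Q z * (∑ v : Ω a, P (Function.update x a v))) *
                (P x * (∑ v : Ω a, Q (Function.update x a v))) := by ring
            _ = (P z * (∑ v : Ω a, Q (Function.update x a v))) *
                (Q x * (∑ v : Ω a, P (Function.update x a v))) := by rw [hx, hzc]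
            _ = (P z * Q x) * ((∑ v : Ω a, Q (Function.update x a v)) *
                (∑ v : Ω a, P (Function.update x a v))) := by ring
        exact mul_right_cancel₀ (mul_ne_zero hSQ hSP) e1
      have h2 : Q y * P z = P y * Q z := by
        refine ih z y fun i hi => ?_
        rcases eq_or_ne i a with rfl | hne
        · rw [hz, Function.update_self]
        · rw [hz, Function.update_of_ne hne]
          exact h i (by simp [hne, hi])
      have e2 : (Q y * P x) * (P z * Q z) = (P y * Q x) * (P z * Q z) := by
        calc (Q y * P x) * (P z * Q z) = (Q y * P z) * (Q z * P x) := by ring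
          _ = (P y * Q z) * (P z * Q x) := by rw [h2, h1]
          _ = (P y * Q x) * (P z * Q z) := by ring
      exact mul_right_cancel₀ (mul_pos (hPpos z) (hQpos z)).ne' e2
  -- conclude
  funext x
  have hr : ∀ y, Q y * P x = P y * Q x := fun y =>
    key Finset.univ x y (fun i hi => absurd (Finset.mem_univ i) hi)
  have : (∑ y, Q y) * P x = (∑ y, P y) * Q x := by
    rw [Finset.sum_mul, Finset.sum_mul]
    exact Finset.sum_congr rfl fun y _ => hr y
  rw [hQsum, hPsum, one_mul, one_mul] at this
  exact this.symm
end
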